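/- There exists ν₊ > 0 such that for every ν ∈ (0, ν₊] the set B_ν is forward invariant for the flow of F_ν: every solution z defined on [0, ∞) with z(0) ∈ B_ν satisfies z(t) ∈ B_ν for all t ≥ 0. -/

import Mathlib

open Set

/-- The planar vector field `F_ν(x, y) = (x(ν − x²) + x³y + xy², −y + x²y + x⁴)`. -/
noncomputable def F (ν : ℝ) (p : ℝ × ℝ) : ℝ × ℝ :=
  (p.1 * (ν - p.1 ^ 2) + p.1 ^ 3 * p.2 + p.1 * p.2 ^ 2,
   -p.2 + p.1 ^ 2 * p.2 + p.1 ^ 4)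

/-- The box `B_θ = [−√(2θ), √(2θ)] × [−θ, θ]`. -/
noncomputable def B (θ : ℝ) : Set (ℝ × ℝ) :=
  Icc (-Real.sqrt (2 * θ)) (Real.sqrt (2 * θ)) ×ˢ Icc (-θ) θ

open Filter Topology

lemma key_upper {f : ℝ → ℝ} {t₀ c f' : ℝ} (hd : HasDerivAt f f' t₀) (h1 : f t₀ ≤ c)
    (h2 : f t₀ = c → f' < 0) : ∀ᶠ t in 𝓝[>] t₀, f t < c := by
  rcases lt_or_eq_of_le h1 with h | h
  · exact (hd.continuousAt.eventually_lt continuousAt_const h).filter_mono nhdsWithin_le_nhds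
  · have hf' : f' < 0 := h2 h
    have hslope : Tendsto (slope f t₀) (𝓝[≠] t₀) (𝓝 f') :=
      hasDerivAt_iff_tendsto_slope.mp hd
    have hev : ∀ᶠ t in 𝓝[≠] t₀, slope f t₀ t < 0 :=
      hslope.eventually (Filter.Tendsto.eventually_lt_const hf' tendsto_id)
    have hmono : 𝓝[>] t₀ ≤ 𝓝[≠] t₀ :=
      nhdsWithin_mono _ (fun x hx => ne_of_gt hx)
    filter_upwards [hmono hev, self_mem_nhdsWithin] with t hts ht
    have htt : (0:ℝ) < t - t₀ := sub_pos.mpr ht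
    rw [slope_def_field] at hts
    rcases div_neg_iff.mp hts with ⟨_, h2⟩ | ⟨h1, _⟩
    · linarith
    · linarith

lemma key_lower {f : ℝ → ℝ} {t₀ c f' : ℝ} (hd : HasDerivAt f f' t₀) (h1 : c ≤ f t₀)
    (h2 : f t₀ = c → 0 < f') : ∀ᶠ t in 𝓝[>] t₀, c < f t := by
  have := key_upper (c := -c) hd.neg (by simp only [Pi.neg_apply]; linarith)
    (fun h => by have := h2 (by simp only [Pi.neg_apply] at h; linarith); linarith)
  filter_upwards [this] with t ht
  simp only [Pi.neg_apply] at ht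
  linarith

theorem stmt0 :
    ∃ νp : ℝ, 0 < νp ∧ ∀ ν ∈ Ioc (0 : ℝ) νp, ∀ z : ℝ → ℝ × ℝ,
      (∀ t ∈ Ici (0 : ℝ), HasDerivAt z (F ν (z t)) t) →
      z 0 ∈ B ν → ∀ t ≥ (0 : ℝ), z t ∈ B ν := by
  refine ⟨1/8, by norm_num, ?_⟩
  rintro ν ⟨hν0, hν⟩ z hz hz0 T hT
  set c := Real.sqrt (2 * ν) with hc
  have hc0 : 0 < c := Real.sqrt_pos.mpr (by linarith)
  have hc2 : c ^ 2 = 2 * ν := Real.sq_sqrt (by linarith)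
  have main : Icc (0 : ℝ) T ⊆ {s | z s ∈ B ν} := by
    apply IsClosed.Icc_subset_of_forall_mem_nhdsWithin
    · have hcont : ContinuousOn z (Icc 0 T) := fun s hs =>
        ((hz s hs.1).continuousAt).continuousWithinAt
      have hB : IsClosed (B ν) := isClosed_Icc.prod isClosed_Icc
      have : {s | z s ∈ B ν} ∩ Icc 0 T = Icc (0:ℝ) T ∩ z ⁻¹' (B ν) :=
        Set.inter_comm _ _
      rw [this]
      exact hcont.preimage_isClosed_of_isClosed isClosed_Icc hB
    · exact hz0
    · rintro t₀ ⟨hmem, ht₀, _⟩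
      have hd := hz t₀ ht₀
      -- component derivatives
      have hd1 : HasDerivAt (fun t => (z t).1) (F ν (z t₀)).1 t₀ := by
        have := (ContinuousLinearMap.fst ℝ ℝ ℝ).hasFDerivAt.comp t₀ hd.hasFDerivAt
        exact (by simpa using this.hasDerivAt : HasDerivAt (Prod.fst ∘ z) _ t₀)
      have hd2 : HasDerivAt (fun t => (z t).2) (F ν (z t₀)).2 t₀ := by
        have := (ContinuousLinearMap.snd ℝ ℝ ℝ).hasFDerivAt.comp t₀ hd.hasFDerivAt
        exact (by simpa using this.hasDerivAt : HasDerivAt (Prod.snd ∘ z) _ t₀)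
      obtain ⟨⟨hx1, hx2⟩, hy1, hy2⟩ : ((z t₀).1 ∈ Icc (-c) c) ∧ (z t₀).2 ∈ Icc (-ν) ν := hmem
      set x := (z t₀).1
      set y := (z t₀).2
      have hx2' : x ^ 2 ≤ 2 * ν := by nlinarith
      have E1 : ∀ᶠ t in 𝓝[>] t₀, (z t).1 < c := by
        apply key_upper hd1 hx2
        intro hxc
        have hxc' : x = c := hxc
        have hfac : -ν + 2 * ν * y + y ^ 2 < 0 := by nlinarith [sq_nonneg y]
        have hprod : c * (-ν + 2 * ν * y + y ^ 2) < 0 := mul_neg_of_pos_of_neg hc0 hfac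
        have hkey : x * (ν - x ^ 2) + x ^ 3 * y + x * y ^ 2 = c * (-ν + 2 * ν * y + y ^ 2) := by
          rw [hxc']; linear_combination (c * (y - 1)) * hc2
        show x * (ν - x ^ 2) + x ^ 3 * y + x * y ^ 2 < 0
        linarith [hprod, hkey]
      have E2 : ∀ᶠ t in 𝓝[>] t₀, -c < (z t).1 := by
        apply key_lower hd1 hx1
        intro hxc
        have hxc' : x = -c := hxc
        have hfac : -ν + 2 * ν * y + y ^ 2 < 0 := by nlinarith [sq_nonneg y]
        have hprod : c * (-ν + 2 * ν * y + y ^ 2) < 0 := mul_neg_of_pos_of_neg hc0 hfac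
        have hkey : x * (ν - x ^ 2) + x ^ 3 * y + x * y ^ 2 = -(c * (-ν + 2 * ν * y + y ^ 2)) := by
          rw [hxc']; linear_combination (c * (1 - y)) * hc2
        show 0 < x * (ν - x ^ 2) + x ^ 3 * y + x * y ^ 2
        linarith [hprod, hkey]
      have E3 : ∀ᶠ t in 𝓝[>] t₀, (z t).2 < ν := by
        apply key_upper hd2 hy2
        intro hyc
        have hyc' : y = ν := hyc
        show -y + x ^ 2 * y + x ^ 4 < 0
        nlinarith [sq_nonneg (x^2), sq_nonneg x]
      have E4 : ∀ᶠ t in 𝓝[>] t₀, -ν < (z t).2 := by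
        apply key_lower hd2 hy1
        intro hyc
        have hyc' : y = -ν := hyc
        show 0 < -y + x ^ 2 * y + x ^ 4
        nlinarith [sq_nonneg (x^2), sq_nonneg x]
      filter_upwards [E1, E2, E3, E4] with t h1 h2 h3 h4
      exact ⟨⟨h2.le, h1.le⟩, h4.le, h3.le⟩
  exact main ⟨hT, le_refl T⟩
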